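/- If G is a connected block graph of order at least three and u is a vertex of G that is not a cut-vertex, then there exists a minimum paired-dominating set of G not containing u. -/

import Mathlib

open SimpleGraph

/-- A set `S` is a paired-dominating set of `G`: every vertex outside `S` has a
neighbor in `S`, and the induced subgraph `G[S]` has a perfect matching
(a matching subgraph of `G` whose vertex set is exactly `S`). -/
def IsPDS {V : Type*} (G : SimpleGraph V) (S : Set V) : Prop :=
  (∀ v ∉ S, ∃ u ∈ S, G.Adj u v) ∧
    ∃ M : G.Subgraph, M.verts = S ∧ M.IsMatching

/-- The paired-domination number of `G`. -/
noncomputable def gammaPr {V : Type*} (G : SimpleGraph V) : ℕ :=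
  sInf {n | ∃ S : Set V, IsPDS G S ∧ S.ncard = n}

/-- `v` is a cut-vertex of `G`: deleting `v` disconnects two vertices that
were reachable from each other in `G`. -/
def IsCutVertex {V : Type*} (G : SimpleGraph V) (v : V) : Prop :=
  ∃ (a b : V) (ha : a ∈ ({v}ᶜ : Set V)) (hb : b ∈ ({v}ᶜ : Set V)),
    G.Reachable a b ∧
      ¬ (G.induce ({v}ᶜ : Set V)).Reachable ⟨a, ha⟩ ⟨b, hb⟩

/-- `B` is a block of `G`: a maximal set of vertices inducing a connected
subgraph without a cut-vertex. -/
def IsBlock {V : Type*} (G : SimpleGraph V) (B : Set V) : Prop :=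
  (G.induce B).Connected ∧ (∀ v : B, ¬ IsCutVertex (G.induce B) v) ∧
    ∀ C : Set V, B ⊆ C → (G.induce C).Connected →
      (∀ v : C, ¬ IsCutVertex (G.induce C) v) → C = B

/-- `G` is a block graph: connected, and every block is complete. -/
def IsBlockGraph {V : Type*} (G : SimpleGraph V) : Prop :=
  G.Connected ∧ ∀ B : Set V, IsBlock G B →
    ∀ a ∈ B, ∀ b ∈ B, a ≠ b → G.Adj a b

/-- An end block: a block containing exactly one cut-vertex of `G`. -/
def IsEndBlock {V : Type*} (G : SimpleGraph V) (B : Set V) : Prop :=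
  IsBlock G B ∧ ∃! v : V, v ∈ B ∧ IsCutVertex G v

section Helpers

variable {V : Type*} {G : SimpleGraph V}

/-- Transfer a walk with support in `s` to the induced subgraph. -/
theorem exists_induce_walk {s : Set V} :
    ∀ {x y : V} (p : G.Walk x y) (h : ∀ z ∈ p.support, z ∈ s),
      ∃ q : (G.induce s).Walk ⟨x, h x p.start_mem_support⟩ ⟨y, h y p.end_mem_support⟩,
        q.support.map Subtype.val = p.support := by
  intro x y p
  induction p with
  | nil => intro h; exact ⟨Walk.nil, rfl⟩
  | cons ha p ih =>
    intro h
    have h' : ∀ z ∈ p.support, z ∈ s := fun z hz => h z (List.mem_cons_of_mem _ hz)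
    obtain ⟨q, hq⟩ := ih h'
    refine ⟨Walk.cons (by simpa using ha) q, ?_⟩
    simp [Walk.support_cons, hq]

theorem reachable_induce_of_walk {s : Set V} {x y : V} (p : G.Walk x y)
    (h : ∀ z ∈ p.support, z ∈ s) :
    (G.induce s).Reachable ⟨x, h x p.start_mem_support⟩ ⟨y, h y p.end_mem_support⟩ :=
  (exists_induce_walk p h).elim fun q _ => ⟨q⟩

/-- Transfer a walk in an induced subgraph back to the ambient graph. -/
theorem exists_walk_of_induce {s : Set V} :
    ∀ {x y : s} (q : (G.induce s).Walk x y),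
      ∃ p : G.Walk ↑x ↑y, p.support = q.support.map Subtype.val := by
  intro x y q
  induction q with
  | nil => exact ⟨Walk.nil, rfl⟩
  | cons ha q ih =>
    obtain ⟨p, hp⟩ := ih
    refine ⟨Walk.cons (by simpa using ha) p, ?_⟩
    simp [Walk.support_cons, hp]

theorem matching_deleteVerts_pair {M : G.Subgraph} (hM : M.IsMatching) {u w : V}
    (huw : M.Adj u w) : (M.deleteVerts {u, w}).IsMatching := by
  intro v hv
  rw [Subgraph.deleteVerts_verts] at hv
  obtain ⟨hvM, hvuw⟩ := hv
  simp only [Set.mem_insert_iff, Set.mem_singleton_iff, not_or] at hvuw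
  obtain ⟨p, hp, hpu⟩ := hM hvM
  have hpu' : p ≠ u := by
    rintro rfl
    have := (hM (M.edge_vert huw)).unique (M.adj_symm hp) huw
    exact hvuw.2 this
  have hpw' : p ≠ w := by
    rintro rfl
    have := (hM (M.edge_vert (M.adj_symm huw))).unique (M.adj_symm hp) (M.adj_symm huw)
    exact hvuw.1 this
  refine ⟨p, ?_, ?_⟩
  · show (M.deleteVerts _).Adj v p
    rw [Subgraph.deleteVerts_adj]
    refine ⟨hvM, by simp [hvuw.1, hvuw.2], M.edge_vert (M.adj_symm hp), by simp [hpu', hpw'], hp⟩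
  · intro y hy
    have : (M.deleteVerts {u, w}).Adj v y := hy
    rw [Subgraph.deleteVerts_adj] at this
    exact hpu y this.2.2.2.2

theorem matching_add_pair {M : G.Subgraph} (hM : M.IsMatching) {a b : V}
    (hab : G.Adj a b) (ha : a ∉ M.verts) (hb : b ∉ M.verts) :
    (M ⊔ G.subgraphOfAdj hab).IsMatching := by
  refine hM.sup ?_ ?_
  · intro v hv
    simp only [subgraphOfAdj_verts, Set.mem_insert_iff, Set.mem_singleton_iff] at hv
    rcases hv with rfl | rfl
    · exact ⟨b, by simp, by aesop⟩
    · exact ⟨a, by simp, by aesop⟩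
  · rw [hM.support_eq_verts]
    rw [Set.disjoint_right]
    intro v hv
    have : v ∈ (G.subgraphOfAdj hab).verts := (G.subgraphOfAdj hab).support_subset_verts hv
    simp only [subgraphOfAdj_verts, Set.mem_insert_iff, Set.mem_singleton_iff] at this
    rcases this with rfl | rfl
    · exact ha
    · exact hb

theorem exists_adj_of_connected [Fintype V] (hc : G.Connected) (h2 : 2 ≤ Fintype.card V)
    (v : V) : ∃ w, G.Adj v w := by
  have : Nontrivial V := Fintype.one_lt_card_iff_nontrivial.mp h2
  obtain ⟨w, hw⟩ := exists_ne v
  obtain ⟨p⟩ := hc.preconnected v w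
  cases p with
  | nil => exact (hw rfl).elim
  | cons ha p => exact ⟨_, ha⟩

theorem exists_pds [Fintype V] (hc : G.Connected) (h2 : 2 ≤ Fintype.card V) :
    ∃ S : Set V, IsPDS G S := by
  classical
  set A : Set ℕ := {n | ∃ M : G.Subgraph, M.IsMatching ∧ M.verts.ncard = n} with hA
  obtain ⟨v⟩ : Nonempty V := hc.nonempty
  obtain ⟨w, hvw⟩ := exists_adj_of_connected hc h2 v
  have hAne : A.Nonempty := by
    refine ⟨2, G.subgraphOfAdj hvw, ?_, ?_⟩
    · intro x hx
      simp only [subgraphOfAdj_verts, Set.mem_insert_iff, Set.mem_singleton_iff] at hx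
      rcases hx with rfl | rfl
      · exact ⟨w, by simp, by aesop⟩
      · exact ⟨v, by simp, by aesop⟩
    · simp [Set.ncard_pair hvw.ne]
  have hAbdd : BddAbove A := by
    refine ⟨Fintype.card V, fun n hn => ?_⟩
    obtain ⟨M, _, rfl⟩ := hn
    simpa [Set.ncard_univ] using Set.ncard_le_ncard (Set.subset_univ M.verts) (Set.finite_univ)
  obtain ⟨M, hM, hMcard⟩ := Nat.sSup_mem hAne hAbdd
  refine ⟨M.verts, ?_, M, rfl, hM⟩
  intro x hx
  obtain ⟨y, hxy⟩ := exists_adj_of_connected hc h2 x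
  by_cases hy : y ∈ M.verts
  · exact ⟨y, hy, hxy.symm⟩
  · exfalso
    have hM' := matching_add_pair hM hxy.symm hy hx
    have hmem : (M ⊔ G.subgraphOfAdj hxy.symm).verts.ncard ∈ A := ⟨_, hM', rfl⟩
    have hle := le_csSup hAbdd hmem
    rw [← hMcard] at hle
    have hlt : M.verts.ncard < (M ⊔ G.subgraphOfAdj hxy.symm).verts.ncard := by
      apply Set.ncard_lt_ncard
      · constructor
        · exact fun z hz => Or.inl hz
        · intro hsub
          exact hx (hsub (by simp))
      · exact Set.toFinite _
    omega

section Key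
variable {u a b : V} {p : G.Walk a b}

/-- Walk to `u` within `{u} ∪ support p`. -/
theorem toU_plain (p : G.Walk a b) (hua : G.Adj u a) {x : V} (hx : x ∈ p.support) :
    ∃ wk : G.Walk x u, ∀ z ∈ wk.support, z = u ∨ z ∈ p.support := by
  classical
  refine ⟨(p.takeUntil x hx).reverse.concat hua.symm, ?_⟩
  intro z hz
  rw [Walk.support_concat, Walk.support_reverse] at hz
  rcases (by simpa [List.concat_eq_append] using hz : _ ∨ _) with h | h
  · exact Or.inr (p.support_takeUntil_subset hx h)
  · exact Or.inl h

/-- Walk to `u` within `{u} ∪ support p`, avoiding a given vertex `v ≠ u, v ≠ x`. -/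
theorem toU_avoid (p : G.Walk a b) (hua : G.Adj u a) (hub : G.Adj u b) (hp : p.IsPath)
    {x v : V} (hx : x ∈ p.support)
    (hvu : v ≠ u) (hvx : v ≠ x) :
    ∃ wk : G.Walk x u, (∀ z ∈ wk.support, z = u ∨ z ∈ p.support) ∧ v ∉ wk.support := by
  classical
  by_cases hv : v ∈ (p.takeUntil x hx).support
  · refine ⟨(p.dropUntil x hx).concat hub.symm, ?_, ?_⟩
    · intro z hz
      rw [Walk.support_concat] at hz
      rcases (by simpa [List.concat_eq_append] using hz : _ ∨ _) with h | h
      · exact Or.inr (p.support_dropUntil_subset hx h)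
      · exact Or.inl h
    · rw [Walk.support_concat]
      intro hmem
      rcases (by simpa [List.concat_eq_append] using hmem : _ ∨ _) with h | h
      · have hspec := p.take_spec hx
        have hnd : p.support.Nodup := hp.support_nodup
        rw [← hspec, Walk.support_append, List.nodup_append] at hnd
        have hvtail : v ∉ (p.dropUntil x hx).support.tail := fun ht => hnd.2.2 v hv v ht rfl
        have : (p.dropUntil x hx).support = x :: (p.dropUntil x hx).support.tail := by
          rw [Walk.support_eq_cons]; rfl
        rw [this] at h
        rcases List.mem_cons.mp h with h | h
        · exact hvx h
        · exact hvtail h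
      · exact hvu h
  · refine ⟨(p.takeUntil x hx).reverse.concat hua.symm, ?_, ?_⟩
    · intro z hz
      rw [Walk.support_concat, Walk.support_reverse] at hz
      rcases (by simpa [List.concat_eq_append] using hz : _ ∨ _) with h | h
      · exact Or.inr (p.support_takeUntil_subset hx h)
      · exact Or.inl h
    · rw [Walk.support_concat, Walk.support_reverse]
      intro hmem
      rcases (by simpa [List.concat_eq_append] using hmem : _ ∨ _) with h | h
      · exact hv h
      · exact hvu h
end Key

theorem key {u a b : V} (p : G.Walk a b) (hua : G.Adj u a) (hub : G.Adj u b)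
    (hp : p.IsPath) (hu : u ∉ p.support) :
    (G.induce (insert u {z | z ∈ p.support})).Connected ∧
      ∀ v : (insert u {z | z ∈ p.support} : Set V),
        ¬ IsCutVertex (G.induce (insert u {z | z ∈ p.support})) v := by
  classical
  set W : Set V := insert u {z | z ∈ p.support} with hW
  have huW : u ∈ W := Set.mem_insert _ _
  have hWsub : ∀ z, (z = u ∨ z ∈ p.support) → z ∈ W := by
    intro z hz
    rcases hz with rfl | hz
    · exact huW
    · exact Set.mem_insert_of_mem _ hz
  have hWcases : ∀ z ∈ W, z = u ∨ z ∈ p.support := by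
    intro z hz
    rcases Set.mem_insert_iff.mp hz with rfl | hz
    · exact Or.inl rfl
    · exact Or.inr hz
  constructor
  · refine Connected.mk ?_
    have toU : ∀ x : W, (G.induce W).Reachable x ⟨u, huW⟩ := by
      rintro ⟨x, hx⟩
      rcases hWcases x hx with rfl | hxs
      · exact Reachable.refl _
      · obtain ⟨wk, hwk⟩ := toU_plain p hua hxs
        have hsub : ∀ z ∈ wk.support, z ∈ W := fun z hz => hWsub z (hwk z hz)
        exact reachable_induce_of_walk wk hsub
    intro x y
    exact (toU x).trans (toU y).symm
  · rintro v ⟨x, y, hx, hy, -, hnot⟩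
    apply hnot
    have hx' : x ≠ v := hx
    have hy' : y ≠ v := hy
    have hxv : (x : V) ≠ (v : V) := fun h => hx' (Subtype.ext h)
    have hyv : (y : V) ≠ (v : V) := fun h => hy' (Subtype.ext h)
    have main : ∃ wk : G.Walk (x : V) (y : V),
        ∀ z ∈ wk.support, z ∈ W ∧ z ≠ (v : V) := by
      by_cases hvu : (v : V) = u
      · have hxs : (x : V) ∈ p.support := by
          rcases hWcases x x.2 with h | h
          · exact absurd (h.trans hvu.symm) hxv
          · exact h
        have hys : (y : V) ∈ p.support := by
          rcases hWcases y y.2 with h | h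
          · exact absurd (h.trans hvu.symm) hyv
          · exact h
        refine ⟨(p.takeUntil _ hxs).reverse.append (p.takeUntil _ hys), ?_⟩
        intro z hz
        rw [Walk.mem_support_append_iff] at hz
        have hzs : z ∈ p.support := by
          rcases hz with h | h
          · exact p.support_takeUntil_subset hxs (by simpa using h)
          · exact p.support_takeUntil_subset hys h
        refine ⟨hWsub z (Or.inr hzs), ?_⟩
        rintro rfl
        rw [hvu] at hzs
        exact hu hzs
      · have toU2 : ∀ z : V, z ∈ W → z ≠ (v : V) →
            ∃ wk : G.Walk z u, (∀ t ∈ wk.support, t ∈ W) ∧ (v : V) ∉ wk.support := by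
          intro z hz hzv
          rcases hWcases z hz with rfl | hzs
          · refine ⟨Walk.nil, ?_, ?_⟩
            · intro t ht; simp at ht; subst ht; exact huW
            · simp [hvu]
          · obtain ⟨wk, h1, h2⟩ := toU_avoid p hua hub hp hzs hvu (Ne.symm hzv)
            exact ⟨wk, fun t ht => hWsub t (h1 t ht), h2⟩
        obtain ⟨wk1, h11, h12⟩ := toU2 x x.2 hxv
        obtain ⟨wk2, h21, h22⟩ := toU2 y y.2 hyv
        refine ⟨wk1.append wk2.reverse, ?_⟩
        intro z hz
        rw [Walk.mem_support_append_iff] at hz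
        rcases hz with h | h
        · exact ⟨h11 z h, fun he => h12 (he ▸ h)⟩
        · rw [Walk.support_reverse, List.mem_reverse] at h
          exact ⟨h21 z h, fun he => h22 (he ▸ h)⟩
    obtain ⟨wk, hwk⟩ := main
    obtain ⟨q, hq⟩ := exists_induce_walk (s := W) wk (fun z hz => (hwk z hz).1)
    have hqsup : ∀ z ∈ q.support, z ∈ ({v}ᶜ : Set W) := by
      intro z hz
      have : (z : V) ∈ q.support.map Subtype.val := List.mem_map_of_mem hz
      rw [hq] at this
      exact fun hzv => (hwk _ this).2 (congrArg Subtype.val hzv)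
    have := reachable_induce_of_walk (G := G.induce W) q hqsup
    convert this using 2

/-- every "good" set extends to a block -/
theorem exists_block_superset [Fintype V] {W : Set V}
    (hWc : (G.induce W).Connected) (hWn : ∀ v : W, ¬ IsCutVertex (G.induce W) v) :
    ∃ B : Set V, W ⊆ B ∧ IsBlock G B := by
  classical
  set A : Set ℕ := {n | ∃ C : Set V, W ⊆ C ∧ (G.induce C).Connected ∧
    (∀ v : C, ¬ IsCutVertex (G.induce C) v) ∧ C.ncard = n} with hA
  have hAne : A.Nonempty := ⟨W.ncard, W, subset_rfl, hWc, hWn, rfl⟩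
  have hAbdd : BddAbove A := by
    refine ⟨Fintype.card V, fun n hn => ?_⟩
    obtain ⟨C, _, _, _, rfl⟩ := hn
    simpa [Set.ncard_univ] using Set.ncard_le_ncard (Set.subset_univ C) Set.finite_univ
  obtain ⟨B, hWB, hBc, hBn, hBcard⟩ := Nat.sSup_mem hAne hAbdd
  refine ⟨B, hWB, hBc, hBn, ?_⟩
  intro C hBC hCc hCn
  have hmem : C.ncard ∈ A := ⟨C, hWB.trans hBC, hCc, hCn, rfl⟩
  have := le_csSup hAbdd hmem
  rw [← hBcard] at this
  exact (Set.eq_of_subset_of_ncard_le hBC this (Set.toFinite _)).symm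

theorem simplicial [Fintype V] (hbg : IsBlockGraph G)
    {u : V} (hu : ¬ IsCutVertex G u) {a b : V}
    (ha : G.Adj u a) (hb : G.Adj u b) (hne : a ≠ b) : G.Adj a b := by
  classical
  have hau : a ≠ u := ha.ne'
  have hbu : b ≠ u := hb.ne'
  have hreach : G.Reachable a b := ⟨Walk.cons ha.symm (Walk.cons hb Walk.nil)⟩
  have hind : (G.induce ({u}ᶜ : Set V)).Reachable ⟨a, hau⟩ ⟨b, hbu⟩ := by
    by_contra hcon
    exact hu ⟨a, b, hau, hbu, hreach, hcon⟩
  obtain ⟨q⟩ := hind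
  obtain ⟨p0, hp0⟩ := exists_walk_of_induce q.toPath.1
  have hp0path : p0.IsPath := by
    rw [Walk.isPath_def, hp0]
    exact (q.toPath.2.support_nodup).map Subtype.val_injective
  have hup0 : u ∉ p0.support := by
    rw [hp0]
    rintro hmem
    obtain ⟨z, hz, hz2⟩ := List.mem_map.mp hmem
    exact z.2 hz2
  obtain ⟨hWc, hWn⟩ := key p0 ha hb hp0path hup0
  obtain ⟨B, hWB, hBblock⟩ := exists_block_superset hWc hWn
  refine hbg.2 B hBblock a ?_ b ?_ hne
  · exact hWB (Set.mem_insert_of_mem _ p0.start_mem_support)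
  · exact hWB (Set.mem_insert_of_mem _ p0.end_mem_support)

end Helpers

/-- If `G` is a connected block graph of order at least three and `u` is not a
cut-vertex, then some minimum paired-dominating set of `G` avoids `u`. -/
theorem stmt1 {V : Type*} [Fintype V] (G : SimpleGraph V)
    (hbg : IsBlockGraph G) (h3 : 3 ≤ Fintype.card V)
    (u : V) (hu : ¬ IsCutVertex G u) :
    ∃ S : Set V, IsPDS G S ∧ S.ncard = gammaPr G ∧ u ∉ S := by
  classical
  have h2 : 2 ≤ Fintype.card V := by omega
  have hAne : {n | ∃ S : Set V, IsPDS G S ∧ S.ncard = n}.Nonempty := by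
    obtain ⟨S0, hS0⟩ := exists_pds hbg.1 h2
    exact ⟨S0.ncard, S0, hS0, rfl⟩
  obtain ⟨S, hS, hScard⟩ := Nat.sInf_mem hAne
  by_cases huS : u ∈ S
  swap
  · exact ⟨S, hS, hScard, huS⟩
  obtain ⟨hdom, M, hMv, hM⟩ := hS
  obtain ⟨w, huw, -⟩ := hM (show u ∈ M.verts by rw [hMv]; exact huS)
  have hGuw : G.Adj u w := M.adj_sub huw
  have hwS : w ∈ S := by rw [← hMv]; exact M.edge_vert (M.adj_symm huw)
  have hwu : w ≠ u := hGuw.ne'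
  have hsimp : ∀ ⦃a b : V⦄, G.Adj u a → G.Adj u b → a ≠ b → G.Adj a b :=
    fun a b ha hb hne => simplicial hbg hu ha hb hne
  by_cases hcaseA : ∃ x, x ∉ S ∧ G.Adj w x
  · -- swap u for x
    obtain ⟨x, hxS, hwx⟩ := hcaseA
    have hxu : x ≠ u := fun h => hxS (h ▸ huS)
    refine ⟨insert x (S \ {u}), ⟨?_, ?_⟩, ?_, ?_⟩
    · intro v hv
      simp only [Set.mem_insert_iff, Set.mem_diff, Set.mem_singleton_iff, not_or, not_and,
        not_not] at hv
      obtain ⟨hvx, hv2⟩ := hv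
      by_cases hvu : v = u
      · subst hvu
        exact ⟨w, by simp [hwS, hwu], hGuw.symm⟩
      · have hvS : v ∉ S := fun h => hvu (hv2 h)
        obtain ⟨s, hsS, hsv⟩ := hdom v hvS
        by_cases hsu : s = u
        · subst hsu
          have hvw : v ≠ w := fun h => (h ▸ hvS) hwS
          exact ⟨w, by simp [hwS, hwu], hsimp hGuw hsv hvw.symm⟩
        · exact ⟨s, by simp [hsS, hsu], hsv⟩
    · refine ⟨(M.deleteVerts {u, w}) ⊔ G.subgraphOfAdj hwx, ?_, ?_⟩
      · ext z
        simp only [Subgraph.verts_sup, Subgraph.deleteVerts_verts, subgraphOfAdj_verts, hMv,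
          Set.mem_union, Set.mem_diff, Set.mem_insert_iff, Set.mem_singleton_iff]
        constructor
        · rintro (⟨hzS, hz⟩ | (rfl | rfl))
          · exact Or.inr ⟨hzS, fun h => hz (Or.inl h)⟩
          · exact Or.inr ⟨hwS, hwu⟩
          · exact Or.inl rfl
        · rintro (rfl | ⟨hzS, hzu⟩)
          · exact Or.inr (Or.inr rfl)
          · by_cases hzw : z = w
            · exact Or.inr (Or.inl hzw)
            · exact Or.inl ⟨hzS, by simp [hzu, hzw]⟩
      · refine matching_add_pair (matching_deleteVerts_pair hM huw) hwx ?_ ?_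
        · simp [Subgraph.deleteVerts_verts]
        · simp [Subgraph.deleteVerts_verts, hMv, hxS]
    · rw [Set.ncard_exchange hxS huS]
      exact hScard
    · intro hmem
      rcases Set.mem_insert_iff.mp hmem with h | h
      · exact hxu h.symm
      · exact h.2 rfl
  · -- every neighbor of w outside S ... none
    push_neg at hcaseA
    have hNu : ∀ z, G.Adj u z → z ∈ S := by
      intro z hz
      by_cases hzw : z = w
      · exact hzw ▸ hwS
      · by_contra hzS
        exact hcaseA z hzS (hsimp hGuw hz (Ne.symm hzw)) |>.elim
    by_cases hdegw : ∃ x, G.Adj w x ∧ x ≠ u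
    · obtain ⟨x, hwx, hxu⟩ := hdegw
      have hxS : x ∈ S := by
        by_contra hxS
        exact hcaseA x hxS hwx
      have hxw : x ≠ w := hwx.ne'
      obtain ⟨y, hxy, -⟩ := hM (show x ∈ M.verts by rw [hMv]; exact hxS)
      have hyS : y ∈ S := by rw [← hMv]; exact M.edge_vert (M.adj_symm hxy)
      have hGxy : G.Adj x y := M.adj_sub hxy
      have hyx : y ≠ x := hGxy.ne'
      have hyu : y ≠ u := by
        rintro rfl
        have := (hM (M.edge_vert huw)).unique (M.adj_symm hxy) huw
        exact hxw this
      have hyw : y ≠ w := by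
        rintro rfl
        have := (hM (M.edge_vert (M.adj_symm huw))).unique (M.adj_symm hxy) (M.adj_symm huw)
        exact hxu this
      have hwx' : w ≠ x := Ne.symm hxw
      -- candidate smaller PDS T = S \ {u, y}
      set MT : G.Subgraph :=
        ((M.deleteVerts {u, w}).deleteVerts {x, y}) ⊔ G.subgraphOfAdj hwx with hMT
      have hMTverts : MT.verts = S \ {u, y} := by
        ext z
        simp only [hMT, Subgraph.verts_sup, Subgraph.deleteVerts_verts, subgraphOfAdj_verts, hMv,
          Set.mem_union, Set.mem_diff, Set.mem_insert_iff, Set.mem_singleton_iff]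
        constructor
        · rintro (⟨⟨hzS, hz1⟩, hz2⟩ | (rfl | rfl))
          · exact ⟨hzS, fun h => h.elim (fun h => hz1 (Or.inl h)) (fun h => hz2 (Or.inr h))⟩
          · exact ⟨hwS, fun h => h.elim hwu hyw.symm⟩
          · exact ⟨hxS, fun h => h.elim hxu (fun h => hyx h.symm)⟩
        · rintro ⟨hzS, hz⟩
          simp only [not_or] at hz
          by_cases hzw : z = w
          · exact Or.inr (Or.inl hzw)
          · by_cases hzx : z = x
            · exact Or.inr (Or.inr hzx)
            · exact Or.inl ⟨⟨hzS, by simp [hz.1, hzw]⟩, by simp [hzx, hz.2]⟩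
      have hMTmatch : MT.IsMatching := by
        refine matching_add_pair ?_ hwx ?_ ?_
        · refine matching_deleteVerts_pair (matching_deleteVerts_pair hM huw) ?_
          show (M.deleteVerts {u, w}).Adj x y
          rw [Subgraph.deleteVerts_adj]
          exact ⟨M.edge_vert hxy, by simp [hxu, hxw], M.edge_vert (M.adj_symm hxy),
            by simp [hyu, hyw], hxy⟩
        · simp [Subgraph.deleteVerts_verts]
        · simp [Subgraph.deleteVerts_verts, hxw]
      -- T cannot be a PDS (it would be too small)
      have hTnotPDS : ¬ IsPDS G (S \ ({u, y} : Set V)) := by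
        intro hT
        have hmemT : (S \ ({u, y} : Set V)).ncard ∈
            {n | ∃ S : Set V, IsPDS G S ∧ S.ncard = n} := ⟨_, hT, rfl⟩
        have hle := Nat.sInf_le hmemT
        have hsub : ({u, y} : Set V) ⊆ S := by
          intro z hz
          rcases hz with rfl | hz
          · exact huS
          · rw [Set.mem_singleton_iff] at hz; exact hz ▸ hyS
        have hcard2 : ({u, y} : Set V).ncard = 2 := Set.ncard_pair (Ne.symm hyu)
        have hdiff : (S \ ({u, y} : Set V)).ncard = S.ncard - 2 := by
          rw [Set.ncard_diff hsub (Set.toFinite _), hcard2]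
        have hge2 : 2 ≤ S.ncard := by
          rw [← hcard2]
          refine Set.ncard_le_ncard hsub (Set.toFinite _)
        rw [hdiff, hScard] at hle
        rw [hScard] at hge2
        omega
      -- so domination fails for T : get the vertex v
      have hfail : ∃ v, v ∉ S \ ({u, y} : Set V) ∧
          ∀ s ∈ S \ ({u, y} : Set V), ¬ G.Adj s v := by
        by_contra hfail
        push_neg at hfail
        refine hTnotPDS ⟨?_, MT, hMTverts, hMTmatch⟩
        intro v hv
        obtain ⟨s, hs1, hs2⟩ := hfail v hv
        exact ⟨s, hs1, hs2⟩
      obtain ⟨v, hvT, hvdom⟩ := hfail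
      have hwT : w ∈ S \ ({u, y} : Set V) := ⟨hwS, by simp [hwu, hyw.symm]⟩
      have hxT : x ∈ S \ ({u, y} : Set V) := ⟨hxS, by simp [hxu, hyx.symm]⟩
      have hvu : v ≠ u := by
        rintro rfl
        exact hvdom w hwT hGuw.symm
      have hvy : v ≠ y := by
        rintro rfl
        exact hvdom x hxT hGxy
      have hvS : v ∉ S := fun h => hvT ⟨h, by simp [hvu, hvy]⟩
      obtain ⟨s, hsS, hsv⟩ := hdom v hvS
      have hsy : s = y := by
        by_contra hsy
        have hsu : s ≠ u := by
          rintro rfl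
          exact hvS (hNu v hsv)
        exact hvdom s ⟨hsS, by simp [hsu, hsy]⟩ hsv
      rw [hsy] at hsv
      have hGyv : G.Adj y v := hsv
      have hvw : v ≠ w := fun h => hvS (h ▸ hwS)
      have hvx : v ≠ x := fun h => hvS (h ▸ hxS)
      -- final set : insert v (S \ {u})
      refine ⟨insert v (S \ {u}), ⟨?_, ?_⟩, ?_, ?_⟩
      · intro z hz
        simp only [Set.mem_insert_iff, Set.mem_diff, Set.mem_singleton_iff, not_or, not_and,
          not_not] at hz
        obtain ⟨hzv, hz2⟩ := hz
        by_cases hzu : z = u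
        · subst hzu
          exact ⟨w, by simp [hwS, hwu], hGuw.symm⟩
        · have hzS : z ∉ S := fun h => hzu (hz2 h)
          obtain ⟨s, hsS, hsv'⟩ := hdom z hzS
          have hsu : s ≠ u := by
            rintro rfl
            exact hzS (hNu z hsv')
          exact ⟨s, by simp [hsS, hsu], hsv'⟩
      · refine ⟨MT ⊔ G.subgraphOfAdj hGyv, ?_, ?_⟩
        · ext z
          simp only [Subgraph.verts_sup, subgraphOfAdj_verts, hMTverts, Set.mem_union,
            Set.mem_diff, Set.mem_insert_iff, Set.mem_singleton_iff]
          constructor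
          · rintro (⟨hzS, hz⟩ | (rfl | rfl))
            · simp only [not_or] at hz
              exact Or.inr ⟨hzS, hz.1⟩
            · exact Or.inr ⟨hyS, hyu⟩
            · exact Or.inl rfl
          · rintro (rfl | ⟨hzS, hzu⟩)
            · exact Or.inr (Or.inr rfl)
            · by_cases hzy : z = y
              · exact Or.inr (Or.inl hzy)
              · exact Or.inl ⟨hzS, by simp [hzu, hzy]⟩
        · refine matching_add_pair hMTmatch hGyv ?_ ?_
          · rw [hMTverts]
            simp
          · rw [hMTverts]
            simp [hvS]
      · rw [Set.ncard_exchange hvS huS]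
        exact hScard
      · intro hmem
        rcases Set.mem_insert_iff.mp hmem with h | h
        · exact hvu h.symm
        · exact h.2 rfl
    · -- w has degree 1 : u is a cut vertex, contradiction
      exfalso
      push_neg at hdegw
      have hzex : ∃ z : V, z ≠ u ∧ z ≠ w := by
        by_contra hzex
        push_neg at hzex
        have : (Set.univ : Set V) ⊆ {u, w} := by
          intro z _
          rcases eq_or_ne z u with rfl | hzu
          · exact Or.inl rfl
          · exact Or.inr (hzex z hzu)
        have := Set.ncard_le_ncard this (Set.toFinite _)
        rw [Set.ncard_univ] at this
        have h2' : ({u, w} : Set V).ncard ≤ 2 := Set.ncard_insert_le _ _ |>.trans (by simp)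
        simp only [Nat.card_eq_fintype_card] at this
        omega
      obtain ⟨z, hzu, hzw⟩ := hzex
      apply hu
      refine ⟨w, z, hwu, hzu, hbg.1.preconnected w z, ?_⟩
      rintro ⟨q⟩
      have hne' : (⟨w, hwu⟩ : ({u}ᶜ : Set V)) ≠ ⟨z, hzu⟩ :=
        fun h => hzw (congrArg Subtype.val h).symm
      have hnn : ¬ q.Nil := Walk.not_nil_of_ne hne'
      have hadj := Walk.adj_snd hnn
      have hGadj : G.Adj w ↑(q.getVert 1) := by simpa using hadj
      exact (q.getVert 1).2 (hdegw ↑(q.getVert 1) hGadj)
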